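/- If X is a spiny symmetric set, then its reduction 𝓡X (the quotient of X identifying all fully degenerate simplices in each level) is a spiny symmetric set. -/

import Mathlib

/-- A (skeletal) simplicial set: a contravariant functor on the simplex category,
with `obj n` the set of `n`-simplices and `map α` the action of an
order-preserving map `α : [m] → [n]`. -/
structure SSet' where
  obj : ℕ → Type
  map : ∀ {m n : ℕ}, (Fin (m + 1) →o Fin (n + 1)) → obj n → obj m
  map_id : ∀ (n : ℕ) (x : obj n), map OrderHom.id x = x
  map_comp : ∀ {k m n : ℕ} (α : Fin (k + 1) →o Fin (m + 1)) (β : Fin (m + 1) →o Fin (n + 1))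
      (x : obj n), map (β.comp α) x = map α (map β x)

/-- The order-preserving map `ρ_{ij} : [1] → [n]`, `0 ↦ i`, `1 ↦ j` (for `i ≤ j`). -/
def rho {n : ℕ} (i j : Fin (n + 1)) (h : i ≤ j) : Fin 2 →o Fin (n + 1) where
  toFun := ![i, j]
  monotone' := by
    intro a b hab
    fin_cases a <;> fin_cases b <;> simp_all

/-- The `k`-th edge `ρ_{k,k+1}^*(x)` of an `n`-simplex. -/
def SSet'.edge (X : SSet') {n : ℕ} (x : X.obj n) (k : Fin n) : X.obj 1 :=
  X.map (rho k.castSucc k.succ (Fin.castSucc_lt_succ (i := k)).le) x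

/-- A simplicial set is edgy if each simplex is determined by its string of edges. -/
def SSet'.IsEdgy (X : SSet') : Prop :=
  ∀ n : ℕ, 1 ≤ n → Function.Injective fun (x : X.obj n) (k : Fin n) => X.edge x k

/-- Conjugation of an order-preserving map by the flips `τ`. -/
def conj {m n : ℕ} (α : Fin (m + 1) →o Fin (n + 1)) : Fin (m + 1) →o Fin (n + 1) where
  toFun k := (α k.rev).rev
  monotone' := by
    intro a b hab
    exact Fin.rev_le_rev.mpr (α.monotone (Fin.rev_le_rev.mpr hab))

/-- An anti-involution on a simplicial set `X`, i.e. a simplicial map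
`ν : X^op → X` with `ν^op ∘ ν = id`, described levelwise.  Naturality of
`ν : X^op → X` amounts to `ν (X(τ∘α∘τ) x) = X(α) (ν x)`. -/
structure AntiInvolution (X : SSet') where
  app : ∀ n : ℕ, X.obj n → X.obj n
  naturality : ∀ {m n : ℕ} (α : Fin (m + 1) →o Fin (n + 1)) (x : X.obj n),
    app m (X.map (conj α) x) = X.map α (app n x)
  involutive : ∀ (n : ℕ) (x : X.obj n), app n (app n x) = x

/-- The constant map `[1] → [n]` at the last vertex, i.e. `s_0 ∘ (d_0)^n`. -/
def lastConst (n : ℕ) : Fin 2 →o Fin (n + 1) := ⟨fun _ => Fin.last n, monotone_const⟩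

/-- `LSpec X ν x y` says that `y ∈ X_{2n}` has the edge string
`[f_n† | ⋯ | f_1† | f_1 | ⋯ | f_n]`, where `[f_1 | ⋯ | f_n]` is the edge string of
`x ∈ X_n`, and that the total composite `ρ_{0,2n}^*(y)` is the identity
`s_0(d_0^n x)` on the last vertex of `x`. -/
def LSpec (X : SSet') (ν : AntiInvolution X) {n : ℕ} (x : X.obj n) (y : X.obj (n + n)) : Prop :=
  (∀ k : Fin (n + n), X.edge y k =
      if h : (k : ℕ) < n then ν.app 1 (X.edge x ⟨n - 1 - (k : ℕ), by omega⟩)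
      else X.edge x ⟨(k : ℕ) - n, by have := k.isLt; omega⟩) ∧
  X.map (rho 0 (Fin.last (n + n)) (Fin.zero_le _)) y = X.map (lastConst n) x

/-- A partial groupoid structure on a simplicial set: it is edgy, has an
anti-involution which is the identity on vertices, and has operators
`L : X_n → X_{2n}` with `L[f_1|⋯|f_n] = [f_n†|⋯|f_1†|f_1|⋯|f_n]` whose total
composite is an identity. -/
structure PartialGroupoidStruct (X : SSet') where
  edgy : X.IsEdgy
  inv : AntiInvolution X
  inv_zero : ∀ x : X.obj 0, inv.app 0 x = x
  L : ∀ {n : ℕ}, X.obj n → X.obj (n + n)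
  L_spec : ∀ {n : ℕ}, 1 ≤ n → ∀ x : X.obj n, LSpec X inv x (L x)

/-- The Prop-valued version: `X` together with the anti-involution `ν` is a
partial groupoid. -/
def IsPartialGroupoid (X : SSet') (ν : AntiInvolution X) : Prop :=
  X.IsEdgy ∧ (∀ v : X.obj 0, ν.app 0 v = v) ∧
    ∀ n : ℕ, 1 ≤ n → ∀ x : X.obj n, ∃ y : X.obj (n + n), LSpec X ν x y

/-- The matrix form of an `n`-simplex: `x_{ij} = ρ_{ij}^*(x)` for `i ≤ j`, and
`x_{ji} = (x_{ij})†`. -/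
def matrixForm (X : SSet') (ν : AntiInvolution X) {n : ℕ} (x : X.obj n) (i j : Fin (n + 1)) :
    X.obj 1 :=
  if h : i ≤ j then X.map (rho i j h) x
  else ν.app 1 (X.map (rho j i (le_of_not_ge h)) x)

/-- The fold map `χ_n : [2n] → [n]`, `i ↦ |n - i|`. -/
def chi (n : ℕ) (i : Fin (n + n + 1)) : Fin (n + 1) :=
  ⟨max n (i : ℕ) - min n (i : ℕ), by have := i.isLt; omega⟩

/-- A map of simplicial sets. -/
structure SSetHom (X Y : SSet') where
  app : ∀ n : ℕ, X.obj n → Y.obj n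
  naturality : ∀ {m n : ℕ} (α : Fin (m + 1) →o Fin (n + 1)) (x : X.obj n),
    app m (X.map α x) = Y.map α (app n x)
/-- A symmetric (simplicial) set: a contravariant functor on the category `Υ`
of the sets `[n]` and arbitrary functions. -/
structure SymSet where
  obj : ℕ → Type
  map : ∀ {m n : ℕ}, (Fin (m + 1) → Fin (n + 1)) → obj n → obj m
  map_id : ∀ (n : ℕ) (x : obj n), map id x = x
  map_comp : ∀ {k m n : ℕ} (φ : Fin (k + 1) → Fin (m + 1)) (ψ : Fin (m + 1) → Fin (n + 1))
      (x : obj n), map (ψ ∘ φ) x = map φ (map ψ x)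

/-- Restriction `J^*` of a symmetric set along the inclusion `J : Δ → Υ`. -/
def SymSet.restrict (Z : SymSet) : SSet' where
  obj := Z.obj
  map α x := Z.map (⇑α) x
  map_id n x := Z.map_id n x
  map_comp α β x := Z.map_comp (⇑α) (⇑β) x

/-- A map of symmetric sets. -/
structure SymSetHom (Y Z : SymSet) where
  app : ∀ n : ℕ, Y.obj n → Z.obj n
  naturality : ∀ {m n : ℕ} (φ : Fin (m + 1) → Fin (n + 1)) (x : Y.obj n),
    app m (Y.map φ x) = Z.map φ (app n x)

/-- The identity map of symmetric sets. -/
def SymSetHom.id (X : SymSet) : SymSetHom X X where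
  app _ x := x
  naturality _ _ := rfl

/-- Composition of maps of symmetric sets. -/
def SymSetHom.comp {X Y Z : SymSet} (G : SymSetHom Y Z) (F : SymSetHom X Y) : SymSetHom X Z where
  app n x := G.app n (F.app n x)
  naturality φ x := by rw [F.naturality, G.naturality]

/-- Restriction `J^*` of a map of symmetric sets. -/
def SymSetHom.restrict {Y Z : SymSet} (G : SymSetHom Y Z) : SSetHom Y.restrict Z.restrict where
  app := G.app
  naturality α x := G.naturality (⇑α) x

/-- The `k`-th edge `ρ_{k,k+1}^*(x)` of an `n`-simplex of a symmetric set. -/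
def SymSet.edge (X : SymSet) {n : ℕ} (x : X.obj n) (k : Fin n) : X.obj 1 :=
  X.map (fun t : Fin 2 => if t = 0 then k.castSucc else k.succ) x

/-- A symmetric set is spiny if each simplex is determined by its string of
edges, i.e. `ℰ_n : X_n → ∏_{i=1}^n X_1` is injective for `n ≥ 1`. -/
def SymSet.Spiny (X : SymSet) : Prop :=
  ∀ n : ℕ, 1 ≤ n → Function.Injective fun (x : X.obj n) (k : Fin n) => X.edge x k

/-- An `n`-simplex is fully degenerate if it is the image of a vertex under the
unique map `[n] → [0]`. -/
def SymSet.FullyDeg (X : SymSet) {n : ℕ} (x : X.obj n) : Prop :=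
  ∃ v : X.obj 0, x = X.map (fun _ => (0 : Fin 1)) v

theorem SymSet.fullyDeg_map (X : SymSet) {m n : ℕ} (φ : Fin (m + 1) → Fin (n + 1))
    {x : X.obj n} (h : X.FullyDeg x) : X.FullyDeg (X.map φ x) := by
  obtain ⟨v, rfl⟩ := h
  refine ⟨v, ?_⟩
  rw [← X.map_comp]
  congr 1

/-- The setoid identifying all fully degenerate `n`-simplices. -/
def SymSet.redSetoid (X : SymSet) (n : ℕ) : Setoid (X.obj n) where
  r x y := x = y ∨ (X.FullyDeg x ∧ X.FullyDeg y)
  iseqv := by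
    refine ⟨fun _ => Or.inl rfl, ?_, ?_⟩
    · rintro x y (rfl | ⟨h1, h2⟩)
      · exact Or.inl rfl
      · exact Or.inr ⟨h2, h1⟩
    · rintro x y z (rfl | ⟨h1, h2⟩) h
      · exact h
      · rcases h with rfl | ⟨h3, h4⟩
        · exact Or.inr ⟨h1, h2⟩
        · exact Or.inr ⟨h1, h4⟩

/-- The reduction `𝓡X` of a symmetric set: the levelwise quotient identifying
all fully degenerate simplices to a single point. -/
def SymSet.reduction (X : SymSet) : SymSet where
  obj n := Quotient (X.redSetoid n)
  map φ := Quotient.map (X.map φ) (by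
    rintro x y (rfl | ⟨hx, hy⟩)
    · exact Or.inl rfl
    · exact Or.inr ⟨X.fullyDeg_map φ hx, X.fullyDeg_map φ hy⟩)
  map_id n x := by
    induction x using Quotient.ind
    exact congrArg (Quotient.mk _) (X.map_id n _)
  map_comp φ ψ x := by
    induction x using Quotient.ind
    exact congrArg (Quotient.mk _) (X.map_comp φ ψ _)

namespace SymSet

variable (X : SymSet)

def vert {n : ℕ} (x : X.obj n) (i : Fin (n + 1)) : X.obj 0 :=
  X.map (fun _ => i) x

lemma vert_edge_zero {n : ℕ} (x : X.obj n) (k : Fin n) :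
    X.vert (X.edge x k) 0 = X.vert x k.castSucc := by
  unfold vert edge
  rw [← X.map_comp]
  congr 1

lemma vert_edge_one {n : ℕ} (x : X.obj n) (k : Fin n) :
    X.vert (X.edge x k) 1 = X.vert x k.succ := by
  unfold vert edge
  rw [← X.map_comp]
  congr 1

lemma map_const_zero (v : X.obj 0) : X.map (fun _ : Fin 1 => (0 : Fin 1)) v = v := by
  have : (fun _ : Fin 1 => (0 : Fin 1)) = id := funext fun t => (Subsingleton.elim _ _)
  rw [this, X.map_id]

lemma vert_map {m n : ℕ} (φ : Fin (m + 1) → Fin (n + 1)) (x : X.obj n) (i : Fin (m + 1)) :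
    X.vert (X.map φ x) i = X.vert x (φ i) := by
  unfold vert
  rw [← X.map_comp]
  rfl

lemma vert_self (v : X.obj 0) (i : Fin 1) : X.vert v i = v := by
  have : i = 0 := Subsingleton.elim _ _
  subst this
  exact X.map_const_zero v

lemma fullyDeg_rep {e : X.obj 1} (he : X.FullyDeg e) :
    e = X.map (fun _ : Fin 2 => (0 : Fin 1)) (X.vert e 0) := by
  obtain ⟨v, rfl⟩ := he
  rw [X.vert_map, X.vert_self]

lemma fullyDeg_vert_eq {e : X.obj 1} (he : X.FullyDeg e) : X.vert e 0 = X.vert e 1 := by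
  obtain ⟨v, rfl⟩ := he
  rw [X.vert_map, X.vert_map]

lemma edge_of_const {n : ℕ} (v : X.obj 0) (k : Fin n) :
    X.edge (X.map (fun _ : Fin (n + 1) => (0 : Fin 1)) v) k =
      X.map (fun _ : Fin 2 => (0 : Fin 1)) v := by
  unfold edge
  rw [← X.map_comp]
  rfl

lemma fullyDeg_of_edges (h : X.Spiny) {n : ℕ} (hn : 1 ≤ n) (x : X.obj n)
    (hd : ∀ k : Fin n, X.FullyDeg (X.edge x k)) : X.FullyDeg x := by
  have hv : ∀ i : Fin (n + 1), X.vert x i = X.vert x 0 := by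
    intro i
    obtain ⟨i, hi⟩ := i
    induction i with
    | zero => rfl
    | succ j ih =>
      have hjn : j < n := by omega
      have h1 : X.vert x (Fin.castSucc ⟨j, hjn⟩) = X.vert x (Fin.succ ⟨j, hjn⟩) := by
        have := X.fullyDeg_vert_eq (hd ⟨j, hjn⟩)
        rwa [X.vert_edge_zero, X.vert_edge_one] at this
      have : X.vert x ⟨j + 1, hi⟩ = X.vert x ⟨j, by omega⟩ := h1.symm
      rw [this, ih]
  refine ⟨X.vert x 0, h n hn ?_⟩
  funext k
  simp only
  rw [X.edge_of_const]
  have := X.fullyDeg_rep (hd k)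
  rw [this, X.vert_edge_zero, hv]

end SymSet

theorem reduction_edge_mk (X : SymSet) {n : ℕ} (x : X.obj n) (k : Fin n) :
    X.reduction.edge (Quotient.mk _ x) k = Quotient.mk _ (X.edge x k) := rfl

/-- If `X` is a spiny symmetric set, then so is its reduction
`𝓡X`. -/
theorem reduction_spiny (X : SymSet) (h : X.Spiny) : X.reduction.Spiny := by
  intro n hn a b hab
  induction a using Quotient.ind with | _ x => ?_
  induction b using Quotient.ind with | _ y => ?_
  have hk : ∀ k : Fin n, X.edge x k = X.edge y k ∨
      (X.FullyDeg (X.edge x k) ∧ X.FullyDeg (X.edge y k)) := by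
    intro k
    exact Quotient.exact (congrFun hab k)
  by_cases hall : ∀ k : Fin n, X.FullyDeg (X.edge x k) ∧ X.FullyDeg (X.edge y k)
  · exact Quotient.sound (Or.inr
      ⟨X.fullyDeg_of_edges h hn x fun k => (hall k).1,
       X.fullyDeg_of_edges h hn y fun k => (hall k).2⟩)
  · rw [not_forall] at hall
    obtain ⟨k0, hk0⟩ := hall
    have heq0 : X.edge x k0 = X.edge y k0 := (hk k0).resolve_right hk0
    -- vertices propagate
    have hstep : ∀ k : Fin n,
        (X.vert x k.castSucc = X.vert y k.castSucc ↔ X.vert x k.succ = X.vert y k.succ) := by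
      intro k
      rcases hk k with he | ⟨hdx, hdy⟩
      · constructor
        · intro _
          rw [← X.vert_edge_one x k, he, X.vert_edge_one]
        · intro _
          rw [← X.vert_edge_zero x k, he, X.vert_edge_zero]
      · have hx1 := X.fullyDeg_vert_eq hdx
        rw [X.vert_edge_zero, X.vert_edge_one] at hx1
        have hy1 := X.fullyDeg_vert_eq hdy
        rw [X.vert_edge_zero, X.vert_edge_one] at hy1
        rw [← hx1, ← hy1]
    have hbase : X.vert x k0.castSucc = X.vert y k0.castSucc := by
      rw [← X.vert_edge_zero x k0, heq0, X.vert_edge_zero]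
    have hup : ∀ d : ℕ, ∀ hd : (k0 : ℕ) + d < n + 1,
        X.vert x ⟨(k0 : ℕ) + d, hd⟩ = X.vert y ⟨(k0 : ℕ) + d, hd⟩ := by
      intro d
      induction d with
      | zero => intro hd; exact hbase
      | succ j ih =>
        intro hd
        have hlt : (k0 : ℕ) + j < n := by omega
        have := (hstep ⟨(k0 : ℕ) + j, hlt⟩).mp (ih (by omega))
        exact this
    have hdown : ∀ d : ℕ, ∀ hd : d ≤ (k0 : ℕ),
        X.vert x ⟨(k0 : ℕ) - d, by omega⟩ = X.vert y ⟨(k0 : ℕ) - d, by omega⟩ := by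
      intro d
      induction d with
      | zero => intro hd; exact hbase
      | succ j ih =>
        intro hd
        have hlt : (k0 : ℕ) - (j + 1) < n := by omega
        have hs : (Fin.succ ⟨(k0 : ℕ) - (j + 1), hlt⟩ : Fin (n + 1)) =
            ⟨(k0 : ℕ) - j, by omega⟩ := Fin.ext (by simp; omega)
        have := (hstep ⟨(k0 : ℕ) - (j + 1), hlt⟩).mpr (by rw [hs]; exact ih (by omega))
        exact this
    have hvert : ∀ i : Fin (n + 1), X.vert x i = X.vert y i := by
      intro i
      rcases le_or_gt (k0 : ℕ) (i : ℕ) with hle | hlt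
      · have := hup ((i : ℕ) - (k0 : ℕ)) (by omega)
        have hi : (⟨(k0 : ℕ) + ((i : ℕ) - (k0 : ℕ)), by omega⟩ : Fin (n + 1)) = i :=
          Fin.ext (by simp; omega)
        rwa [hi] at this
      · have := hdown ((k0 : ℕ) - (i : ℕ)) (by omega)
        have hi : (⟨(k0 : ℕ) - ((k0 : ℕ) - (i : ℕ)), by omega⟩ : Fin (n + 1)) = i :=
          Fin.ext (by simp; omega)
        rwa [hi] at this
    have hedges : ∀ k : Fin n, X.edge x k = X.edge y k := by
      intro k
      rcases hk k with he | ⟨hdx, hdy⟩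
      · exact he
      · rw [X.fullyDeg_rep hdx, X.fullyDeg_rep hdy, X.vert_edge_zero, X.vert_edge_zero, hvert]
    exact congrArg (Quotient.mk _) (h n hn (funext hedges))
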